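/- Let H, L : ℝ → ℝ solve dH/dL = -(H+L)/(2H) with H > 0, L ≥ 0. Then the quantity log(H² + (1/2)LH + (1/2)L²) + (2/√7)·arctan(√7·L/(4H+L)) is constant along solutions. Consequently, the solution with H(0) = 1 satisfies, at the point where H = L = L₀ > 0, log(2L₀²) = -(2/√7)·arctan(√7/5), i.e. 2L₀² = exp(-(2/√7)·arctan(√7/5)) ≈ 0.692181687. -/

import Mathlib

open Real

private lemma alg_key (s h x : ℝ) (hs : s ^ 2 = 7) (hh : 0 < h) (hx : 0 ≤ x) :
    ((2 * h ^ 1 * (-(h + x) / (2 * h)) + ((1/2*1) * h + (1/2*x) * (-(h + x) / (2 * h))) + (1/2)*(↑2*x^1))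
      / (h^2 + (1/2)*x*h + (1/2)*x^2))
    + (2 / s) * (1 / (1 + (s * x / (4*h + x))^2) *
        ((s * 1 * (4*h + x) - (s * x) * (4 * (-(h + x) / (2 * h)) + 1)) / (4*h + x)^2)) = 0 := by
  have hs0 : s ≠ 0 := by intro h0; rw [h0] at hs; norm_num at hs
  have hP : h^2 + (1/2)*x*h + (1/2)*x^2 > 0 := by positivity
  have hd : (4*h + x) ≠ 0 := by positivity
  have h1 : 1 + (s * x / (4*h + x))^2 ≠ 0 := by positivity
  field_simp
  linear_combination (-(h*x^3+2*h^2*x^2+x^4)) * hs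

theorem stmt_19 (H : ℝ → ℝ) (L₀ : ℝ) (hL₀ : 0 < L₀)
    (hpos : ∀ L ∈ Set.Icc (0:ℝ) L₀, 0 < H L)
    (hderiv : ∀ L ∈ Set.Icc (0:ℝ) L₀, HasDerivAt H (-(H L + L) / (2 * H L)) L)
    (Q : ℝ → ℝ)
    (hQ : ∀ L, Q L = Real.log ((H L) ^ 2 + (1/2) * L * H L + (1/2) * L ^ 2)
        + (2 / Real.sqrt 7) * Real.arctan (Real.sqrt 7 * L / (4 * H L + L))) :
    (∀ L₁ ∈ Set.Icc (0:ℝ) L₀, ∀ L₂ ∈ Set.Icc (0:ℝ) L₀, Q L₁ = Q L₂) ∧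
    (H 0 = 1 → H L₀ = L₀ →
      Real.log (2 * L₀ ^ 2) = -(2 / Real.sqrt 7) * Real.arctan (Real.sqrt 7 / 5) ∧
      2 * L₀ ^ 2 = Real.exp (-(2 / Real.sqrt 7) * Real.arctan (Real.sqrt 7 / 5))) := by
  have hQfun : Q = fun L => Real.log ((H L) ^ 2 + (1/2) * L * H L + (1/2) * L ^ 2)
        + (2 / Real.sqrt 7) * Real.arctan (Real.sqrt 7 * L / (4 * H L + L)) := funext hQ
  have key : ∀ x ∈ Set.Icc (0:ℝ) L₀, HasDerivAt Q 0 x := by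
    intro x hx
    have hH := hpos x hx
    have hd := hderiv x hx
    have hx0 : (0:ℝ) ≤ x := hx.1
    have hden : (4 * H x + x) ≠ 0 := by positivity
    have hP : (H x)^2 + (1/2) * x * H x + (1/2) * x^2 > 0 := by positivity
    set h' := -(H x + x) / (2 * H x) with hh'
    have dP : HasDerivAt (fun y => (H y)^2 + (1/2)*y*(H y) + (1/2)*y^2)
        (2 * H x ^ 1 * h' + ((1/2*1) * H x + (1/2*x) * h') + (1/2)*(↑2*x^1)) x :=
      ((hd.pow 2).add (((hasDerivAt_id x).const_mul (1/2)).mul hd)).add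
        ((hasDerivAt_pow 2 x).const_mul (1/2))
    have dlog := dP.log hP.ne'
    have du : HasDerivAt (fun y => Real.sqrt 7 * y / (4 * H y + y))
        ((Real.sqrt 7 * 1 * (4 * H x + x) - (Real.sqrt 7 * x) * (4 * h' + 1)) / (4 * H x + x)^2) x :=
      ((hasDerivAt_id x).const_mul (Real.sqrt 7)).div ((hd.const_mul 4).add (hasDerivAt_id x)) hden
    have darc := (du.arctan).const_mul (2 / Real.sqrt 7)
    have dQ := dlog.add darc
    rw [hQfun]
    refine dQ.congr_deriv ?_
    rw [hh']
    exact (alg_key (Real.sqrt 7) (H x) x (Real.sq_sqrt (by norm_num)) hH hx0)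
  have hmem0 : (0:ℝ) ∈ Set.Icc (0:ℝ) L₀ := Set.left_mem_Icc.2 hL₀.le
  have hconst : ∀ x ∈ Set.Icc (0:ℝ) L₀, Q x = Q 0 := by
    apply constant_of_has_deriv_right_zero
    · exact fun y hy => (key y hy).continuousAt.continuousWithinAt
    · exact fun y hy => (key y (Set.Ico_subset_Icc_self hy)).hasDerivWithinAt
  constructor
  · intro L₁ h₁ L₂ h₂
    rw [hconst L₁ h₁, hconst L₂ h₂]
  · intro h0 hL
    have hmemL : L₀ ∈ Set.Icc (0:ℝ) L₀ := Set.right_mem_Icc.2 hL₀.le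
    have hq0 : Q 0 = 0 := by
      rw [hQ 0, h0]
      norm_num
    have hqL : Q L₀ = Real.log (2 * L₀ ^ 2)
        + (2 / Real.sqrt 7) * Real.arctan (Real.sqrt 7 / 5) := by
      rw [hQ L₀, hL]
      have h1 : L₀ ^ 2 + 1/2 * L₀ * L₀ + 1/2 * L₀ ^ 2 = 2 * L₀ ^ 2 := by ring
      have h2 : Real.sqrt 7 * L₀ / (4 * L₀ + L₀) = Real.sqrt 7 / 5 := by
        rw [show (4:ℝ) * L₀ + L₀ = 5 * L₀ by ring]
        rw [mul_comm (5:ℝ) L₀, ← div_div, mul_div_assoc, div_self hL₀.ne', mul_one]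
      rw [h1, h2]
    have heq : Q L₀ = Q 0 := hconst L₀ hmemL
    rw [hq0, hqL] at heq
    have hlog : Real.log (2 * L₀ ^ 2) = -(2 / Real.sqrt 7) * Real.arctan (Real.sqrt 7 / 5) := by
      linarith
    refine ⟨hlog, ?_⟩
    rw [← hlog, Real.exp_log (by positivity)]
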